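/- arXiv:2001.10927 — 2 statements merged into one kernel-verified Lean document; each statement's English description precedes it below -/
import Mathlib

section
/- For every sequence λ = ((l₁,c₁),…,(l_s,c_s)) of primary particles consecutively related by ≻_ε, there exists a unique pair of subsets I, J of {1,…,s} such that: (1) I, I+1 and J form a set-partition of {1,…,s}; (2) for all i ∈ I, l_i − l_{i+1} = Δ(i,i+1); (3) for all j ∈ J with 2 ≤ j ≤ s, l_{j−1} − l_j > Δ(j−1,j). -/
open Finset in
/-- The formal energy of transfer `Δ(k,k')` along the state sequence `c`:
`Δ(k,k') = Σ_{u=k}^{k'−1} ε(c_u,c_{u+1})` for `k ≤ k'` and `Δ(k,k') = −Δ(k',k)` else. -/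
noncomputable def Del {C : Type*} (ε : C → C → ℤ) (c : ℤ → C) (k k' : ℤ) : ℤ :=
  (∑ u ∈ Finset.Ico k k', ε (c u) (c (u + 1))) -
    ∑ u ∈ Finset.Ico k' k, ε (c u) (c (u + 1))

/-- `β(k,k') = |[k,k') ∩ J|` for `k ≤ k'` and `β(k,k') = −β(k',k)` otherwise. -/
noncomputable def Bet (J : Finset ℤ) (k k' : ℤ) : ℤ :=
  ((Finset.Ico k k' ∩ J).card : ℤ) - ((Finset.Ico k' k ∩ J).card : ℤ)

def Fch {C : Type*} (ε : C → C → ℤ) (s : ℤ) (l : ℤ → ℤ) (c : ℤ → C) : ℕ → Bool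
  | 0 => false
  | n+1 =>
    (decide ((1:ℤ) ≤ s - ((n:ℤ)+1) ∧
      l (s - ((n:ℤ)+1)) - l (s - (n:ℤ)) = ε (c (s - ((n:ℤ)+1))) (c (s - (n:ℤ)))))
      && !(Fch ε s l c n)

lemma Del_succ {C : Type*} (ε : C → C → ℤ) (c : ℤ → C) (k : ℤ) :
    Del ε c k (k+1) = ε (c k) (c (k+1)) := by
  have h1 : Finset.Ico k (k+1) = {k} := by ext x; simp [Finset.mem_Ico]; omega
  have h2 : Finset.Ico (k+1) k = ∅ := by apply Finset.Ico_eq_empty; omega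
  simp [Del, h1, h2]

lemma Fch_true_iff {C : Type*} (ε : C → C → ℤ) (s : ℤ) (l : ℤ → ℤ) (c : ℤ → C)
    (k : ℤ) (hk : k ≤ s) :
    Fch ε s l c (s - k).toNat = true ↔
      (1 ≤ k ∧ k < s ∧ l k - l (k+1) = ε (c k) (c (k+1))) ∧
        Fch ε s l c (s - (k+1)).toNat = false := by
  rcases eq_or_lt_of_le hk with rfl | hlt
  · have h0 : (k - k).toNat = 0 := by omega
    rw [h0]
    constructor
    · intro h; simp [Fch] at h
    · rintro ⟨⟨-, h, -⟩, -⟩; exact absurd h (lt_irrefl k)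
  · set n := (s - (k+1)).toNat with hn
    have hnk : (s - k).toNat = n + 1 := by omega
    have e1 : s - ((n:ℤ) + 1) = k := by omega
    have e2 : s - (n:ℤ) = k + 1 := by omega
    rw [hnk]
    simp only [Fch, Bool.and_eq_true, decide_eq_true_eq, Bool.not_eq_true']
    rw [e1, e2]
    constructor
    · rintro ⟨⟨h1, h2⟩, h3⟩; exact ⟨⟨h1, hlt, h2⟩, h3⟩
    · rintro ⟨⟨h1, -, h2⟩, h3⟩; exact ⟨⟨h1, h2⟩, h3⟩

/-- Remark 4.1: for every sequence of primary particles consecutively related by `≻_ε`,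
there is a unique pair of subsets `I, J` of `{1,…,s}` such that `I`, `I+1`, `J` form a
set-partition of `{1,…,s}`, `l_i − l_{i+1} = Δ(i,i+1)` for all `i ∈ I`, and
`l_{j−1} − l_j > Δ(j−1,j)` for all `j ∈ J` with `j ≥ 2`. -/
theorem statement11 {C : Type*} (ε : C → C → ℤ)
    (hε : ∀ c c', ε c c' = 0 ∨ ε c c' = 1)
    (s : ℤ) (l : ℤ → ℤ) (c : ℤ → C)
    (hchain : ∀ k, 1 ≤ k → k < s → ε (c k) (c (k + 1)) ≤ l k - l (k + 1)) :
    ∃! IJ : Finset ℤ × Finset ℤ,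
      (Disjoint IJ.1 (IJ.1.image (· + 1)) ∧ Disjoint IJ.1 IJ.2 ∧
        Disjoint (IJ.1.image (· + 1)) IJ.2 ∧
        IJ.1 ∪ IJ.1.image (· + 1) ∪ IJ.2 = Finset.Icc 1 s) ∧
      (∀ i ∈ IJ.1, l i - l (i + 1) = Del ε c i (i + 1)) ∧
      (∀ j ∈ IJ.2, 2 ≤ j → Del ε c (j - 1) j < l (j - 1) - l j) := by
  classical
  set F : ℕ → Bool := Fch ε s l c with hF
  set I : Finset ℤ := (Finset.Icc 1 s).filter (fun k => F (s-k).toNat = true) with hI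
  set J : Finset ℤ := (Finset.Icc 1 s).filter
      (fun k => F (s-k).toNat = false ∧ F (s-k+1).toNat = false) with hJ
  have hmemI : ∀ k : ℤ, k ∈ I ↔ (1 ≤ k ∧ k ≤ s ∧ F (s-k).toNat = true) := by
    intro k; rw [hI]; simp [Finset.mem_filter, Finset.mem_Icc, and_assoc]
  have hmemJ : ∀ k : ℤ, k ∈ J ↔
      (1 ≤ k ∧ k ≤ s ∧ F (s-k).toNat = false ∧ F (s-k+1).toNat = false) := by
    intro k; rw [hJ]; simp [Finset.mem_filter, Finset.mem_Icc, and_assoc]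
  have hmemI1 : ∀ k : ℤ, k ∈ I.image (· + 1) ↔ (k-1) ∈ I := by
    intro k
    simp only [Finset.mem_image]
    constructor
    · rintro ⟨a, ha, rfl⟩; simpa using ha
    · intro h; exact ⟨k-1, h, by ring⟩
  -- characterization of F via Fch_true_iff
  have hFt : ∀ k : ℤ, k ≤ s → (F (s-k).toNat = true ↔
      (1 ≤ k ∧ k < s ∧ l k - l (k+1) = ε (c k) (c (k+1))) ∧ F (s-(k+1)).toNat = false) :=
    fun k hk => Fch_true_iff ε s l c k hk
  have hprop : (Disjoint I (I.image (· + 1)) ∧ Disjoint I J ∧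
        Disjoint (I.image (· + 1)) J ∧
        I ∪ I.image (· + 1) ∪ J = Finset.Icc 1 s) ∧
      (∀ i ∈ I, l i - l (i + 1) = Del ε c i (i + 1)) ∧
      (∀ j ∈ J, 2 ≤ j → Del ε c (j - 1) j < l (j - 1) - l j) := by
    refine ⟨⟨?_, ?_, ?_, ?_⟩, ?_, ?_⟩
    · -- Disjoint I (I+1)
      rw [Finset.disjoint_left]
      intro k hk hk1
      rw [hmemI] at hk
      rw [hmemI1, hmemI] at hk1
      obtain ⟨hk1a, hk1b, hk1c⟩ := hk1
      have h5 := ((hFt (k-1) (by omega)).mp hk1c).2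
      have e : k - 1 + 1 = k := by ring
      rw [e] at h5
      rw [h5] at hk
      exact absurd hk.2.2 (by simp)
    · -- Disjoint I J
      rw [Finset.disjoint_left]
      intro k hk hkJ
      rw [hmemI] at hk; rw [hmemJ] at hkJ
      rw [hk.2.2] at hkJ
      exact absurd hkJ.2.2.1 (by simp)
    · -- Disjoint (I+1) J
      rw [Finset.disjoint_left]
      intro k hk hkJ
      rw [hmemI1, hmemI] at hk
      rw [hmemJ] at hkJ
      have e : s - (k-1) = s - k + 1 := by ring
      rw [e] at hk
      rw [hk.2.2] at hkJ
      exact absurd hkJ.2.2.2 (by simp)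
    · -- union
      ext k
      simp only [Finset.mem_union, Finset.mem_Icc]
      constructor
      · rintro ((h | h) | h)
        · rw [hmemI] at h; exact ⟨h.1, h.2.1⟩
        · rw [hmemI1, hmemI] at h
          obtain ⟨h1, h2, h3⟩ := h
          have := ((hFt (k-1) (by omega)).mp h3).1.2.1
          omega
        · rw [hmemJ] at h; exact ⟨h.1, h.2.1⟩
      · rintro ⟨h1, h2⟩
        by_cases ht : F (s-k).toNat = true
        · exact Or.inl (Or.inl ((hmemI k).mpr ⟨h1, h2, ht⟩))
        · have hf : F (s-k).toNat = false := by simpa using ht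
          by_cases ht1 : F (s-k+1).toNat = true
          · refine Or.inl (Or.inr ((hmemI1 k).mpr ?_))
            have e : s - (k-1) = s - k + 1 := by ring
            have h3 : F (s-(k-1)).toNat = true := by rw [e]; exact ht1
            have := ((hFt (k-1) (by omega)).mp h3).1
            exact (hmemI (k-1)).mpr ⟨this.1, by omega, h3⟩
          · exact Or.inr ((hmemJ k).mpr ⟨h1, h2, hf, by simpa using ht1⟩)
    · -- equality on I
      intro i hi
      rw [hmemI] at hi
      have := ((hFt i hi.2.1).mp hi.2.2).1.2.2
      rw [Del_succ]; exact this
    · -- strict on J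
      intro j hj h2j
      rw [hmemJ] at hj
      obtain ⟨hj1, hj2, hjf, hjf1⟩ := hj
      have e : s - (j-1) = s - j + 1 := by ring
      have hne : ¬ ((1 ≤ j-1 ∧ j-1 < s ∧ l (j-1) - l (j-1+1) = ε (c (j-1)) (c (j-1+1))) ∧
          F (s-((j-1)+1)).toNat = false) := by
        intro hcon
        have := (hFt (j-1) (by omega)).mpr hcon
        rw [e] at this
        rw [this] at hjf1
        exact absurd hjf1 (by simp)
      have e2 : j - 1 + 1 = j := by ring
      have hne2 : l (j-1) - l j ≠ ε (c (j-1)) (c j) := by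
        intro hcon
        apply hne
        refine ⟨⟨by omega, by omega, by rw [e2]; exact hcon⟩, ?_⟩
        rw [e2]; exact hjf
      have hch := hchain (j-1) (by omega) (by omega)
      rw [e2] at hch
      have hDel : Del ε c (j-1) j = ε (c (j-1)) (c j) := by
        have := Del_succ ε c (j-1)
        rw [e2] at this; exact this
      rw [hDel]; omega
  refine ⟨(I, J), hprop, ?_⟩
  rintro ⟨I', J'⟩ ⟨⟨hd1, hd2, hd3, hu⟩, h2', h3'⟩
  simp only at hd1 hd2 hd3 hu h2' h3' ⊢
  have hsubI : I' ⊆ Finset.Icc 1 s := by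
    intro x hx
    rw [← hu]
    exact Finset.mem_union_left _ (Finset.mem_union_left _ hx)
  have key : ∀ n : ℕ, ((s - (n:ℤ)) ∈ I' ↔ F n = true) := by
    intro n
    induction n with
    | zero =>
      simp only [Nat.cast_zero, sub_zero]
      constructor
      · intro hs
        have hmem : s + 1 ∈ Finset.Icc 1 s := by
          rw [← hu]
          refine Finset.mem_union_left _ (Finset.mem_union_right _ ?_)
          exact Finset.mem_image_of_mem _ hs
        rw [Finset.mem_Icc] at hmem
        omega
      · intro h; exact absurd h (by simp [hF, Fch])
    | succ n ih =>
      set k : ℤ := s - ((n:ℤ)+1) with hk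
      have hks : k ≤ s := by omega
      have hnk : (s - k).toNat = n + 1 := by omega
      have hnk1 : (s - (k+1)).toNat = n := by omega
      have goalF : F (n+1) = F (s-k).toNat := by rw [hnk]
      have hcast : ((n:ℤ)+1) = ((n+1 : ℕ) : ℤ) := by push_cast; ring
      have hgoal : (s - ((n+1:ℕ):ℤ) ∈ I' ↔ F (n+1) = true) ↔
          (k ∈ I' ↔ F (s-k).toNat = true) := by
        rw [goalF, hk, hcast]
      rw [hgoal, hFt k hks, hnk1]
      have hkI : k + 1 = s - (n:ℤ) := by omega
      constructor
      · intro hx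
        have hkIcc : k ∈ Finset.Icc 1 s := hsubI hx
        rw [Finset.mem_Icc] at hkIcc
        have him : k + 1 ∈ I'.image (· + 1) := Finset.mem_image_of_mem _ hx
        have hk1Icc : k + 1 ∈ Finset.Icc 1 s := by
          rw [← hu]
          exact Finset.mem_union_left _ (Finset.mem_union_right _ him)
        rw [Finset.mem_Icc] at hk1Icc
        have heq : l k - l (k+1) = ε (c k) (c (k+1)) := by
          have := h2' k hx
          rwa [Del_succ] at this
        have hnotI : k + 1 ∉ I' := Finset.disjoint_right.mp hd1 him
        have hFn : F n = false := by
          by_contra hc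
          have : F n = true := by simpa using hc
          rw [← hkI] at ih
          exact hnotI (ih.mpr this)
        exact ⟨⟨hkIcc.1, by omega, heq⟩, hFn⟩
      · rintro ⟨⟨hk1, hks', heq⟩, hFn⟩
        have hnotI : k + 1 ∉ I' := by
          intro hc
          rw [hkI] at hc
          rw [ih] at hc
          rw [hc] at hFn
          exact absurd hFn (by simp)
        have hk1Icc : k + 1 ∈ Finset.Icc 1 s := by rw [Finset.mem_Icc]; omega
        rw [← hu] at hk1Icc
        rcases Finset.mem_union.mp hk1Icc with h | h
        · rcases Finset.mem_union.mp h with h | h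
          · exact absurd h hnotI
          · obtain ⟨a, ha, hae⟩ := Finset.mem_image.mp h
            have : a = k := by omega
            rwa [this] at ha
        · exfalso
          have := h3' (k+1) h (by omega)
          have e3 : k + 1 - 1 = k := by ring
          rw [e3] at this
          have hDel : Del ε c k (k+1) = ε (c k) (c (k+1)) := Del_succ ε c k
          rw [hDel] at this
          omega
  have hIeq : I' = I := by
    ext k
    constructor
    · intro hk
      have hkIcc := hsubI hk
      rw [Finset.mem_Icc] at hkIcc
      have hn : (s - ((s-k).toNat : ℤ)) = k := by omega
      have := key (s-k).toNat
      rw [hn] at this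
      exact (hmemI k).mpr ⟨hkIcc.1, hkIcc.2, this.mp hk⟩
    · intro hk
      rw [hmemI] at hk
      have hn : (s - ((s-k).toNat : ℤ)) = k := by omega
      have := key (s-k).toNat
      rw [hn] at this
      exact this.mpr hk.2.2
  have hJdet : ∀ (A B : Finset ℤ), Disjoint A B → Disjoint (A.image (· + 1)) B →
      A ∪ A.image (· + 1) ∪ B = Finset.Icc 1 s →
      B = Finset.Icc 1 s \ (A ∪ A.image (· + 1)) := by
    intro A B d2 d3 hun
    ext x
    simp only [Finset.mem_sdiff, ← hun, Finset.mem_union]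
    constructor
    · intro hx
      refine ⟨Or.inr hx, ?_⟩
      rintro (h | h)
      · exact (Finset.disjoint_left.mp d2 h) hx
      · exact (Finset.disjoint_left.mp d3 h) hx
    · rintro ⟨h, hn⟩
      rcases h with (h | h) | h
      · exact absurd (Or.inl h) hn
      · exact absurd (Or.inr h) hn
      · exact h
  have hJeq : J' = J := by
    rw [hJdet I' J' hd2 hd3 hu, hIeq,
      hJdet I J hprop.1.2.1 hprop.1.2.2.1 hprop.1.2.2.2]
  rw [hIeq, hJeq]
end

section
/- Let ν ∈ E_ε be written as a sequence of primary particles ((l₁,c₁),…,(l_s,c_s)) with I indexing upper halves of the secondary particles (so l_i = l_{i+1} + ε(c_i,c_{i+1}) for i ∈ I), I+1 indexing lower halves, and J indexing the primary particles of ν, I, I+1, J forming a set-partition of {1,…,s}. Define ψ(j,i) = l_j − l_i − Δ(j,i) on J × I. Then ψ is strictly decreasing in its first argument on J and non-decreasing in its second argument on I: for all j < j' in J and i ∈ I, ψ(j,i) > ψ(j',i), and for all j ∈ J and i < i' in I, ψ(j,i) ≤ ψ(j,i'). -/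
/-- The function `ψ(j,i) = l_j − l_i − Δ(j,i)` from Proposition 4.10. -/
noncomputable def Psi {C : Type*} (ε : C → C → ℤ) (c : ℤ → C) (l : ℤ → ℤ) (j i : ℤ) : ℤ :=
  l j - l i - Del ε c j i

private lemma del_anti {C : Type*} (ε : C → C → ℤ) (c : ℤ → C) (a b : ℤ) :
    Del ε c a b = - Del ε c b a := by
  simp only [Del]; ring

private lemma del_add_of_le {C : Type*} (ε : C → C → ℤ) (c : ℤ → C) {a b d : ℤ}
    (h1 : a ≤ b) (h2 : b ≤ d) : Del ε c a d = Del ε c a b + Del ε c b d := by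
  simp only [Del]
  rw [Finset.Ico_eq_empty (not_lt.mpr h1), Finset.Ico_eq_empty (not_lt.mpr h2),
    Finset.Ico_eq_empty (not_lt.mpr (h1.trans h2)), ← Finset.Ico_union_Ico_eq_Ico h1 h2,
    Finset.sum_union (Finset.Ico_disjoint_Ico_consecutive a b d)]
  simp

private lemma del_add {C : Type*} (ε : C → C → ℤ) (c : ℤ → C) (a b d : ℤ) :
    Del ε c a d = Del ε c a b + Del ε c b d := by
  rcases le_total a b with h1 | h1 <;> rcases le_total b d with h2 | h2
  · exact del_add_of_le ε c h1 h2
  · rcases le_total a d with h3 | h3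
    · have h := del_add_of_le ε c h3 h2
      have h4 := del_anti ε c b d
      linarith
    · have h := del_add_of_le ε c h3 h1
      have h4 := del_anti ε c b d
      have h5 := del_anti ε c a d
      linarith
  · rcases le_total a d with h3 | h3
    · have h := del_add_of_le ε c h1 h3
      have h4 := del_anti ε c a b
      linarith
    · have h := del_add_of_le ε c h2 h3
      have h4 := del_anti ε c a b
      have h5 := del_anti ε c a d
      linarith
  · have h := del_add_of_le ε c h2 h1
    have h4 := del_anti ε c a b
    have h5 := del_anti ε c a d
    have h6 := del_anti ε c b d
    linarith

private lemma del_one {C : Type*} (ε : C → C → ℤ) (c : ℤ → C) (a b : ℤ) (h : b = a + 1) :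
    Del ε c 1 b = Del ε c 1 a + ε (c a) (c b) := by
  subst h
  have h1 := del_add ε c 1 a (a + 1)
  have h2 : Del ε c a (a + 1) = ε (c a) (c (a + 1)) := by
    simp only [Del]
    rw [show Finset.Ico (a + 1) a = ∅ from Finset.Ico_eq_empty (by omega),
      show Finset.Ico a (a + 1) = {a} from by ext x; simp; omega]
    simp
  linarith

private lemma psi_eq {C : Type*} (ε : C → C → ℤ) (c : ℤ → C) (l : ℤ → ℤ) (j i : ℤ) :
    Psi ε c l j i = (l j + Del ε c 1 j) - (l i + Del ε c 1 i) := by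
  have h1 := del_add ε c j 1 i
  have h2 := del_anti ε c j 1
  simp only [Psi]; linarith

/-- `hf k` : the value used for strict decrease along `J`. -/
private noncomputable def hf {C : Type*} (ε : C → C → ℤ) (c : ℤ → C) (l : ℤ → ℤ) (I : Finset ℤ)
    (k : ℤ) : ℤ :=
  if k ∈ I then 2 * l (k + 1) + Del ε c 1 (k + 1) else l k + Del ε c 1 k

/-- `Hf k` : the value used for weak decrease along `I`. -/
private noncomputable def Hf {C : Type*} (ε : C → C → ℤ) (c : ℤ → C) (l : ℤ → ℤ) (I : Finset ℤ)
    (k : ℤ) : ℤ :=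
  if k ∈ I then 2 * (l k + Del ε c 1 k) else l k + Del ε c 1 k + Del ε c 1 (k + 1)

/-- In the proof of Proposition 4.10: `ψ` is strictly decreasing in its first argument
on `J` and non-decreasing in its second argument on `I`. -/
theorem statement17 {C : Type*} (ε : C → C → ℤ)
    (hε : ∀ c c', ε c c' = 0 ∨ ε c c' = 1)
    (s : ℤ) (l : ℤ → ℤ) (c : ℤ → C) (I J : Finset ℤ)
    (hd1 : Disjoint I (I.image (· + 1))) (hd2 : Disjoint I J)
    (hd3 : Disjoint (I.image (· + 1)) J)
    (hu : I ∪ I.image (· + 1) ∪ J = Finset.Icc 1 s)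
    (hupper : ∀ i ∈ I, l i = l (i + 1) + ε (c i) (c (i + 1)))
    (hJJ : ∀ k, k ∈ J → k + 1 ∈ J →
      ε (c k) (c (k + 1)) < l k - l (k + 1))
    (hJI : ∀ k, k ∈ J → k + 1 ∈ I →
      ε (c k) (c (k + 1)) + ε (c (k + 1)) (c (k + 2)) ≤
        l k - (2 * l (k + 2) + ε (c (k + 1)) (c (k + 2))))
    (hIJ : ∀ i ∈ I, i + 2 ∈ J →
      ε (c i) (c (i + 1)) + ε (c (i + 1)) (c (i + 2)) <
        (2 * l (i + 1) + ε (c i) (c (i + 1))) - l (i + 2))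
    (hII : ∀ i ∈ I, i + 2 ∈ I →
      ε (c (i + 1)) (c (i + 2)) + ε (c (i + 2)) (c (i + 3)) ≤ l (i + 1) - l (i + 3))
    :
    (∀ j ∈ J, ∀ j' ∈ J, j < j' → ∀ i ∈ I, Psi ε c l j' i < Psi ε c l j i) ∧
    (∀ j ∈ J, ∀ i ∈ I, ∀ i' ∈ I, i < i' → Psi ε c l j i ≤ Psi ε c l j i') := by
  classical
  have eps : ∀ u : ℤ, 0 ≤ ε (c u) (c (u + 1)) ∧ ε (c u) (c (u + 1)) ≤ 1 := fun u => by
    rcases hε (c u) (c (u + 1)) with h | h <;> omega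
  have memIcc : ∀ k : ℤ, k ∈ I ∨ k ∈ J → 1 ≤ k ∧ k ≤ s := by
    intro k hk
    have hk' : k ∈ Finset.Icc 1 s := by
      rw [← hu]
      rcases hk with h | h
      · exact Finset.mem_union_left _ (Finset.mem_union_left _ h)
      · exact Finset.mem_union_right _ h
    simpa [Finset.mem_Icc] using hk'
  have memL : ∀ k ∈ I, k + 1 ≤ s := by
    intro k hk
    have hk' : k + 1 ∈ Finset.Icc 1 s := by
      rw [← hu]
      exact Finset.mem_union_left _
        (Finset.mem_union_right _ (Finset.mem_image.mpr ⟨k, hk, rfl⟩))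
    have := Finset.mem_Icc.mp hk'
    omega
  have dIJ : ∀ k, k ∈ I → k ∈ J → False := fun k h1 h2 => Finset.disjoint_left.mp hd2 h1 h2
  have dIL : ∀ k, k ∈ I → k + 1 ∈ I → False := fun k h1 h2 =>
    Finset.disjoint_left.mp hd1 h2 (Finset.mem_image.mpr ⟨k, h1, rfl⟩)
  have dLJ : ∀ k, k ∈ I → k + 1 ∈ J → False := fun k h1 h2 =>
    Finset.disjoint_left.mp hd3 (Finset.mem_image.mpr ⟨k, h1, rfl⟩) h2
  have trich : ∀ k : ℤ, 1 ≤ k → k ≤ s → k ∈ I ∨ (k - 1) ∈ I ∨ k ∈ J := by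
    intro k h1 h2
    have hk : k ∈ Finset.Icc 1 s := Finset.mem_Icc.mpr ⟨h1, h2⟩
    rw [← hu] at hk
    rcases Finset.mem_union.mp hk with hk | hk
    · rcases Finset.mem_union.mp hk with hk | hk
      · exact Or.inl hk
      · obtain ⟨a, ha, hak⟩ := Finset.mem_image.mp hk
        refine Or.inr (Or.inl ?_)
        have : k - 1 = a := by omega
        rwa [this]
    · exact Or.inr (Or.inr hk)
  have nextJ : ∀ k, k ∈ J → k + 1 ≤ s → k + 1 ∈ I ∨ k + 1 ∈ J := by
    intro k hk hks
    have h1 : 1 ≤ k := (memIcc k (Or.inr hk)).1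
    rcases trich (k + 1) (by omega) hks with h | h | h
    · exact Or.inl h
    · refine absurd hk (fun hkJ => dIJ k ?_ hkJ)
      rwa [show k + 1 - 1 = k by ring] at h
    · exact Or.inr h
  have nextI : ∀ k, k ∈ I → k + 2 ≤ s → k + 2 ∈ I ∨ k + 2 ∈ J := by
    intro k hk hks
    have h1 : 1 ≤ k := (memIcc k (Or.inl hk)).1
    rcases trich (k + 2) (by omega) hks with h | h | h
    · exact Or.inl h
    · exact absurd hk (fun _ => dIL k hk (by rwa [show k + 2 - 1 = k + 1 by ring] at h))
    · exact Or.inr h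
  -- the four step lemmas
  have stepJJ : ∀ k, k ∈ J → k + 1 ∈ J →
      hf ε c l I (k + 1) + 1 ≤ hf ε c l I k ∧ Hf ε c l I (k + 1) ≤ Hf ε c l I k := by
    intro k hk hk1
    have hnI : k ∉ I := fun h => dIJ k h hk
    have hnI1 : k + 1 ∉ I := fun h => dIJ (k + 1) h hk1
    have d1 := del_one ε c k (k + 1) (by ring)
    have d2 := del_one ε c (k + 1) (k + 2) (by ring)
    have e0 := eps k
    have e1 := eps (k + 1)
    rw [show k + 1 + 1 = k + 2 by ring] at e1
    have hj := hJJ k hk hk1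
    simp only [hf, Hf, if_neg hnI, if_neg hnI1]
    rw [show k + 1 + 1 = k + 2 by ring]
    omega
  have stepJI : ∀ k, k ∈ J → k + 1 ∈ I →
      hf ε c l I (k + 1) ≤ hf ε c l I k ∧ Hf ε c l I (k + 1) ≤ Hf ε c l I k := by
    intro k hk hk1
    have hnI : k ∉ I := fun h => dIJ k h hk
    have d1 := del_one ε c k (k + 1) (by ring)
    have d2 := del_one ε c (k + 1) (k + 2) (by ring)
    have e0 := eps k
    have e1 := eps (k + 1)
    rw [show k + 1 + 1 = k + 2 by ring] at e1
    have hu1 : l (k + 1) = l (k + 2) + ε (c (k + 1)) (c (k + 2)) := by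
      have := hupper (k + 1) hk1
      rwa [show k + 1 + 1 = k + 2 by ring] at this
    have hj := hJI k hk hk1
    simp only [hf, Hf, if_neg hnI, if_pos hk1]
    rw [show k + 1 + 1 = k + 2 by ring]
    omega
  have stepIJ : ∀ k, k ∈ I → k + 2 ∈ J →
      hf ε c l I (k + 2) + 1 ≤ hf ε c l I k ∧ Hf ε c l I (k + 2) ≤ Hf ε c l I k + 1 := by
    intro k hk hk2
    have hnI2 : k + 2 ∉ I := fun h => dIJ (k + 2) h hk2
    have d1 := del_one ε c k (k + 1) (by ring)
    have d2 := del_one ε c (k + 1) (k + 2) (by ring)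
    have d3 := del_one ε c (k + 2) (k + 3) (by ring)
    have e0 := eps k
    have e1 := eps (k + 1)
    rw [show k + 1 + 1 = k + 2 by ring] at e1
    have e2 := eps (k + 2)
    rw [show k + 2 + 1 = k + 3 by ring] at e2
    have hu0 : l k = l (k + 1) + ε (c k) (c (k + 1)) := hupper k hk
    have hj := hIJ k hk hk2
    simp only [hf, Hf, if_pos hk, if_neg hnI2]
    rw [show k + 2 + 1 = k + 3 by ring]
    omega
  have stepII : ∀ k, k ∈ I → k + 2 ∈ I →
      hf ε c l I (k + 2) ≤ hf ε c l I k ∧ Hf ε c l I (k + 2) ≤ Hf ε c l I k := by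
    intro k hk hk2
    have d1 := del_one ε c k (k + 1) (by ring)
    have d2 := del_one ε c (k + 1) (k + 2) (by ring)
    have d3 := del_one ε c (k + 2) (k + 3) (by ring)
    have e0 := eps k
    have e1 := eps (k + 1)
    rw [show k + 1 + 1 = k + 2 by ring] at e1
    have e2 := eps (k + 2)
    rw [show k + 2 + 1 = k + 3 by ring] at e2
    have hu0 : l k = l (k + 1) + ε (c k) (c (k + 1)) := hupper k hk
    have hu2 : l (k + 2) = l (k + 3) + ε (c (k + 2)) (c (k + 3)) := by
      have := hupper (k + 2) hk2
      rwa [show k + 2 + 1 = k + 3 by ring] at this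
    have hj := hII k hk hk2
    simp only [hf, Hf, if_pos hk, if_pos hk2]
    rw [show k + 2 + 1 = k + 3 by ring]
    omega
  -- main induction for strict decrease along J
  have main1 : ∀ n : ℕ, ∀ k k' : ℤ, (k ∈ I ∨ k ∈ J) → (k' ∈ I ∨ k' ∈ J) → k ≤ k' →
      (k' - k).toNat = n →
      hf ε c l I k' ≤ hf ε c l I k ∧
        (k' ∈ J → k < k' → hf ε c l I k' + 1 ≤ hf ε c l I k) := by
    intro n
    induction n using Nat.strong_induction_on with
    | _ n ih =>
      intro k k' hk hk' hle hn
      rcases eq_or_lt_of_le hle with heq | hlt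
      · subst heq
        exact ⟨le_refl _, fun _ h => absurd h (lt_irrefl k)⟩
      · have hk's : k' ≤ s := (memIcc k' hk').2
        rcases hk with hkI | hkJ
        · have hne : k + 1 ≠ k' := by
            intro h
            rcases hk' with h' | h'
            · exact dIL k hkI (by rwa [h])
            · exact dLJ k hkI (by rwa [h])
          have hk2 : k + 2 ≤ k' := by omega
          have hnext := nextI k hkI (by omega)
          have hstep : hf ε c l I (k + 2) ≤ hf ε c l I k ∧
              (k + 2 ∈ J → hf ε c l I (k + 2) + 1 ≤ hf ε c l I k) := by
            rcases hnext with h | h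
            · exact ⟨(stepII k hkI h).1, fun hj => (dIJ _ h hj).elim⟩
            · have := (stepIJ k hkI h).1
              exact ⟨by omega, fun _ => this⟩
          rcases eq_or_lt_of_le hk2 with heq2 | hlt2
          · rw [← heq2]
            exact ⟨hstep.1, fun hj _ => hstep.2 hj⟩
          · have ihh := ih ((k' - (k + 2)).toNat) (by omega) (k + 2) k' hnext hk'
              (by omega) rfl
            exact ⟨le_trans ihh.1 hstep.1,
              fun hj _ => le_trans (ihh.2 hj hlt2) hstep.1⟩
        · have hk1 : k + 1 ≤ k' := by omega
          have hnext := nextJ k hkJ (by omega)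
          have hstep : hf ε c l I (k + 1) ≤ hf ε c l I k ∧
              (k + 1 ∈ J → hf ε c l I (k + 1) + 1 ≤ hf ε c l I k) := by
            rcases hnext with h | h
            · exact ⟨(stepJI k hkJ h).1, fun hj => (dIJ _ h hj).elim⟩
            · have := (stepJJ k hkJ h).1
              exact ⟨by omega, fun _ => this⟩
          rcases eq_or_lt_of_le hk1 with heq1 | hlt1
          · rw [← heq1]
            exact ⟨hstep.1, fun hj _ => hstep.2 hj⟩
          · have ihh := ih ((k' - (k + 1)).toNat) (by omega) (k + 1) k' hnext hk'
              (by omega) rfl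
            exact ⟨le_trans ihh.1 hstep.1,
              fun hj _ => le_trans (ihh.2 hj hlt1) hstep.1⟩
  -- chain along a block of J's, ending in I
  have chain : ∀ n : ℕ, ∀ k i' : ℤ, k ∈ J → i' ∈ I → k ≤ i' →
      (∀ x ∈ I, ¬ (k ≤ x ∧ x < i')) → (i' - k).toNat = n →
      Hf ε c l I i' ≤ Hf ε c l I k := by
    intro n
    induction n using Nat.strong_induction_on with
    | _ n ih =>
      intro k i' hkJ hi'I hle hno hn
      have hne : k ≠ i' := fun h => dIJ i' hi'I (by rwa [h] at hkJ)
      have hlt : k < i' := lt_of_le_of_ne hle hne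
      have hs : i' ≤ s := (memIcc i' (Or.inl hi'I)).2
      rcases nextJ k hkJ (by omega) with h | h
      · have hnlt : ¬ (k + 1 < i') := fun hc => hno (k + 1) h ⟨by omega, hc⟩
        have heq : k + 1 = i' := by omega
        rw [← heq]
        exact (stepJI k hkJ h).2
      · have hstep := (stepJJ k hkJ h).2
        have hrec := ih ((i' - (k + 1)).toNat) (by omega) (k + 1) i' h hi'I (by omega)
          (fun x hx hc => hno x hx ⟨by omega, hc.2⟩) rfl
        omega
  -- consecutive elements of I
  have consec : ∀ i i' : ℤ, i ∈ I → i' ∈ I → i < i' →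
      (∀ x ∈ I, ¬ (i < x ∧ x < i')) →
      l i' + Del ε c 1 i' ≤ l i + Del ε c 1 i := by
    intro i i' hi hi' hlt hno
    have hs : i' ≤ s := (memIcc i' (Or.inl hi')).2
    have hne : i + 1 ≠ i' := fun h => dIL i hi (by rwa [h])
    have h2 : i + 2 ≤ i' := by omega
    have hkey : Hf ε c l I i' ≤ Hf ε c l I i + 1 := by
      rcases nextI i hi (by omega) with h | h
      · have hnlt : ¬ (i + 2 < i') := fun hc => hno (i + 2) h ⟨by omega, hc⟩
        have heq : i + 2 = i' := by omega
        rw [← heq]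
        have := (stepII i hi h).2
        omega
      · have hstep := (stepIJ i hi h).2
        have hrec := chain ((i' - (i + 2)).toNat) (i + 2) i' h hi' (by omega)
          (fun x hx hc => hno x hx ⟨by omega, hc.2⟩) rfl
        omega
    have e1 : Hf ε c l I i = 2 * (l i + Del ε c 1 i) := by
      simp only [Hf]; rw [if_pos hi]
    have e2 : Hf ε c l I i' = 2 * (l i' + Del ε c 1 i') := by
      simp only [Hf]; rw [if_pos hi']
    omega
  -- monotonicity along I
  have gmono : ∀ n : ℕ, ∀ i i' : ℤ, i ∈ I → i' ∈ I → i ≤ i' → (i' - i).toNat = n →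
      l i' + Del ε c 1 i' ≤ l i + Del ε c 1 i := by
    intro n
    induction n using Nat.strong_induction_on with
    | _ n ih =>
      intro i i' hi hi' hle hn
      rcases eq_or_lt_of_le hle with heq | hlt
      · subst heq; exact le_refl _
      · by_cases hmid : ∃ x ∈ I, i < x ∧ x < i'
        · obtain ⟨x, hx, hx1, hx2⟩ := hmid
          have a1 := ih ((x - i).toNat) (by omega) i x hi hx (by omega) rfl
          have a2 := ih ((i' - x).toNat) (by omega) x i' hx hi' (by omega) rfl
          omega
        · exact consec i i' hi hi' hlt (fun x hx hc => hmid ⟨x, hx, hc⟩)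
  constructor
  · intro j hj j' hj' hjj i hi
    have hm := main1 ((j' - j).toNat) j j' (Or.inr hj) (Or.inr hj') (le_of_lt hjj) rfl
    have hstrict := hm.2 hj' hjj
    have e1 : hf ε c l I j = l j + Del ε c 1 j := by
      simp only [hf]; rw [if_neg (fun h => dIJ j h hj)]
    have e2 : hf ε c l I j' = l j' + Del ε c 1 j' := by
      simp only [hf]; rw [if_neg (fun h => dIJ j' h hj')]
    rw [psi_eq, psi_eq]
    omega
  · intro j hj i hi i' hi' hii
    have hm := gmono ((i' - i).toNat) i i' hi hi' (le_of_lt hii) rfl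
    rw [psi_eq, psi_eq]
    omega
end
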